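/- Let B^T and B^NT be nonnegative integrable real-valued random variables, let K ≥ 0, η^T ≥ 0, η^NT ≥ 0, η^S ≥ 0, η^I > 0, and p ∈ [0, 1). Define, for b^T, b^NT ≥ 0, F(b^T, b^NT) = (K + η^T·E[B^T·1_{B^T ≤ b^T}] + (η^NT/(1 − p))·E[B^NT·1_{B^NT ≤ b^NT}]) / (η^I + η^T·P(B^T ≤ b^T) + η^NT·P(B^NT ≤ b^NT) + p·η^S), and set v = inf_{b^T, b^NT ≥ 0} F(b^T, b^NT). Then F(v, (1 − p)·v) = v; in particular the infimum over pairs is attained, and inf_{b ≥ 0} F(b, (1 − p)·b) = v. -/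

import Mathlib

open MeasureTheory

section Aux

variable {Ω : Type*} [MeasurableSpace Ω] (P : Measure Ω) [IsProbabilityMeasure P]

lemma aux_int_trunc (g : Ω → ℝ) (hg : Measurable g) (hgint : Integrable g P) (b : ℝ) :
    Integrable (fun ω => if g ω ≤ b then g ω else 0) P := by
  have hs : MeasurableSet {ω | g ω ≤ b} := hg measurableSet_Iic
  have := hgint.indicator hs
  refine this.congr (Filter.Eventually.of_forall fun ω => ?_)
  simp [Set.indicator_apply, Set.mem_setOf_eq]

lemma aux_int_const (g : Ω → ℝ) (hg : Measurable g) (b c : ℝ) :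
    Integrable (fun ω => if g ω ≤ b then c else 0) P := by
  have hs : MeasurableSet {ω | g ω ≤ b} := hg measurableSet_Iic
  have := (integrable_const c (μ := P)).indicator hs
  refine this.congr (Filter.Eventually.of_forall fun ω => ?_)
  simp [Set.indicator_apply, Set.mem_setOf_eq]

lemma aux_int_shift (g : Ω → ℝ) (hg : Measurable g) (hgint : Integrable g P) (b c : ℝ) :
    Integrable (fun ω => if g ω ≤ b then g ω - c else 0) P := by
  have h := (aux_int_trunc P g hg hgint b).sub (aux_int_const P g hg b c)
  refine h.congr (Filter.Eventually.of_forall fun ω => ?_)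
  by_cases h : g ω ≤ b <;> simp [h]

lemma aux_prob_integral (g : Ω → ℝ) (hg : Measurable g) (b c : ℝ) :
    c * (P {ω | g ω ≤ b}).toReal = ∫ ω, (if g ω ≤ b then c else 0) ∂P := by
  have hs : MeasurableSet {ω | g ω ≤ b} := hg measurableSet_Iic
  rw [show (fun ω => if g ω ≤ b then c else 0)
      = Set.indicator {ω | g ω ≤ b} (fun _ => c) by
    funext ω; simp [Set.indicator_apply, Set.mem_setOf_eq]]
  rw [integral_indicator_const c hs]
  simp [mul_comm, Measure.real]

/-- Key pointwise-minimization inequality: truncating at the shift value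
minimizes the integral of `(g - c)·1_{g ≤ b}` over `b`. -/
lemma aux_key (g : Ω → ℝ) (hg : Measurable g) (hgint : Integrable g P) (c b : ℝ) :
    ∫ ω, (if g ω ≤ c then g ω - c else 0) ∂P
      ≤ ∫ ω, (if g ω ≤ b then g ω - c else 0) ∂P := by
  refine integral_mono (aux_int_shift P g hg hgint c c)
    (aux_int_shift P g hg hgint b c) (fun ω => ?_)
  by_cases h1 : g ω ≤ c <;> by_cases h2 : g ω ≤ b <;> simp [h1, h2] <;> linarith

end Aux

/-- In the social marketing model with no discounting, informed
proportion `p`, and fully second-price auctions, the one-step cost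
`F(b^T, b^NT) = (K + η^T·E[B^T·1_{B^T ≤ b^T}] + (η^NT/(1−p))·E[B^NT·1_{B^NT ≤ b^NT}])
  / (η^I + η^T·P(B^T ≤ b^T) + η^NT·P(B^NT ≤ b^NT) + p·η^S)`
with `v = inf_{b^T, b^NT ≥ 0} F(b^T, b^NT)` satisfies `F(v, (1−p)·v) = v`; in
particular the infimum over pairs is attained and
`inf_{b ≥ 0} F(b, (1−p)·b) = v`. -/
theorem second_price_truthful_reduction
    {Ω : Type*} [MeasurableSpace Ω] (P : Measure Ω) [IsProbabilityMeasure P]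
    (XT XNT : Ω → ℝ) (hXT : Measurable XT) (hXNT : Measurable XNT)
    (hXT0 : ∀ ω, 0 ≤ XT ω) (hXNT0 : ∀ ω, 0 ≤ XNT ω)
    (hXTint : Integrable XT P) (hXNTint : Integrable XNT P)
    (K ηT ηNT ηS ηI : ℝ) (hK : 0 ≤ K) (hηT : 0 ≤ ηT) (hηNT : 0 ≤ ηNT)
    (hηS : 0 ≤ ηS) (hηI : 0 < ηI)
    (p : ℝ) (hp : p ∈ Set.Ico (0 : ℝ) 1)
    (F : ℝ → ℝ → ℝ)
    (hF : ∀ bT bNT, F bT bNT =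
      (K + ηT * (∫ ω, (if XT ω ≤ bT then XT ω else 0) ∂P)
         + (ηNT / (1 - p)) * (∫ ω, (if XNT ω ≤ bNT then XNT ω else 0) ∂P))
      / (ηI + ηT * (P {ω | XT ω ≤ bT}).toReal
           + ηNT * (P {ω | XNT ω ≤ bNT}).toReal + p * ηS))
    (v : ℝ)
    (hv : v = sInf {y : ℝ | ∃ bT ≥ (0 : ℝ), ∃ bNT ≥ (0 : ℝ), F bT bNT = y}) :
    F v ((1 - p) * v) = v ∧
      sInf {y : ℝ | ∃ b ≥ (0 : ℝ), F b ((1 - p) * b) = y} = v := by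
  obtain ⟨hp0, hp1⟩ := hp
  have h1p : (0:ℝ) < 1 - p := by linarith
  set IT : ℝ → ℝ := fun b => ∫ ω, (if XT ω ≤ b then XT ω else 0) ∂P with hIT
  set INT : ℝ → ℝ := fun b => ∫ ω, (if XNT ω ≤ b then XNT ω else 0) ∂P with hINT
  set PT : ℝ → ℝ := fun b => (P {ω | XT ω ≤ b}).toReal with hPT
  set PNT : ℝ → ℝ := fun b => (P {ω | XNT ω ≤ b}).toReal with hPNT
  set N : ℝ → ℝ → ℝ := fun b c => K + ηT * IT b + (ηNT / (1 - p)) * INT c with hN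
  set D : ℝ → ℝ → ℝ := fun b c => ηI + ηT * PT b + ηNT * PNT c + p * ηS with hD
  have hFND : ∀ b c, F b c = N b c / D b c := hF
  have hPT0 : ∀ b, 0 ≤ PT b := fun b => ENNReal.toReal_nonneg
  have hPNT0 : ∀ b, 0 ≤ PNT b := fun b => ENNReal.toReal_nonneg
  have hPT1 : ∀ b, PT b ≤ 1 := fun b => by
    have := prob_le_one (μ := P) (s := {ω | XT ω ≤ b})
    simpa using ENNReal.toReal_mono ENNReal.one_ne_top this
  have hPNT1 : ∀ b, PNT b ≤ 1 := fun b => by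
    have := prob_le_one (μ := P) (s := {ω | XNT ω ≤ b})
    simpa using ENNReal.toReal_mono ENNReal.one_ne_top this
  have hIT0 : ∀ b, 0 ≤ IT b := fun b =>
    integral_nonneg fun ω => by by_cases h : XT ω ≤ b <;> simp [h, hXT0 ω]
  have hINT0 : ∀ b, 0 ≤ INT b := fun b =>
    integral_nonneg fun ω => by by_cases h : XNT ω ≤ b <;> simp [h, hXNT0 ω]
  have hηNT' : 0 ≤ ηNT / (1 - p) := div_nonneg hηNT h1p.le
  have hDpos : ∀ b c, 0 < D b c := fun b c => by
    have := mul_nonneg hηT (hPT0 b)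
    have := mul_nonneg hηNT (hPNT0 c)
    have := mul_nonneg hp0 hηS
    simp only [hD]; linarith
  have hN0 : ∀ b c, 0 ≤ N b c := fun b c => by
    have := mul_nonneg hηT (hIT0 b)
    have := mul_nonneg hηNT' (hINT0 c)
    simp only [hN]; linarith
  have hF0 : ∀ b c, 0 ≤ F b c := fun b c => by
    rw [hFND]; exact div_nonneg (hN0 b c) (hDpos b c).le
  set S : Set ℝ := {y : ℝ | ∃ bT ≥ (0 : ℝ), ∃ bNT ≥ (0 : ℝ), F bT bNT = y} with hS
  have hSne : S.Nonempty := ⟨F 0 0, 0, le_refl 0, 0, le_refl 0, rfl⟩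
  have hSbdd : BddBelow S := ⟨0, fun y ⟨b, _, c, _, h⟩ => h ▸ hF0 b c⟩
  have hv0 : 0 ≤ v := hv ▸ le_csInf hSne fun y ⟨b, _, c, _, h⟩ => h ▸ hF0 b c
  have hvle : ∀ b c, 0 ≤ b → 0 ≤ c → v ≤ F b c := fun b c hb hc =>
    hv ▸ csInf_le hSbdd ⟨b, hb, c, hc, rfl⟩
  -- H b c = N b c - v * D b c
  set H : ℝ → ℝ → ℝ := fun b c => N b c - v * D b c with hH
  have hHnn : ∀ b c, 0 ≤ b → 0 ≤ c → 0 ≤ H b c := fun b c hb hc => by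
    have h := hvle b c hb hc
    rw [hFND, le_div_iff₀ (hDpos b c)] at h
    simp only [hH]; linarith
  -- rewrite H using shifted integrals
  have hJT : ∀ b, IT b - v * PT b = ∫ ω, (if XT ω ≤ b then XT ω - v else 0) ∂P := by
    intro b
    rw [aux_prob_integral P XT hXT b v, hIT]
    rw [← integral_sub (aux_int_trunc P XT hXT hXTint b) (aux_int_const P XT hXT b v)]
    congr 1; funext ω; by_cases h : XT ω ≤ b <;> simp [h]
  have hJNT : ∀ c, INT c - ((1 - p) * v) * PNT c
      = ∫ ω, (if XNT ω ≤ c then XNT ω - (1 - p) * v else 0) ∂P := by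
    intro c
    rw [aux_prob_integral P XNT hXNT c ((1 - p) * v), hINT]
    rw [← integral_sub (aux_int_trunc P XNT hXNT hXNTint c)
      (aux_int_const P XNT hXNT c ((1 - p) * v))]
    congr 1; funext ω; by_cases h : XNT ω ≤ c <;> simp [h]
  have hHform : ∀ b c, H b c = (K - v * (ηI + p * ηS))
      + ηT * (IT b - v * PT b) + (ηNT / (1 - p)) * (INT c - ((1 - p) * v) * PNT c) := by
    intro b c
    have : (ηNT / (1 - p)) * ((1 - p) * v * PNT c) = v * (ηNT * PNT c) := by
      field_simp
    simp only [hH, hN, hD]; linarith [this]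
  -- minimality of truthful bids
  have hHmin : ∀ b c, H v ((1 - p) * v) ≤ H b c := by
    intro b c
    rw [hHform, hHform]
    have h1 : IT v - v * PT v ≤ IT b - v * PT b := by
      rw [hJT, hJT]; exact aux_key P XT hXT hXTint v b
    have h2 : INT ((1 - p) * v) - ((1 - p) * v) * PNT ((1 - p) * v)
        ≤ INT c - ((1 - p) * v) * PNT c := by
      rw [hJNT, hJNT]; exact aux_key P XNT hXNT hXNTint ((1 - p) * v) c
    have := mul_le_mul_of_nonneg_left h1 hηT
    have := mul_le_mul_of_nonneg_left h2 hηNT'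
    linarith
  -- H at truthful bids is ≤ 0
  have hDle : ∀ b c, D b c ≤ ηI + ηT + ηNT + ηS := fun b c => by
    have h1 := mul_le_mul_of_nonneg_left (hPT1 b) hηT
    have h2 := mul_le_mul_of_nonneg_left (hPNT1 c) hηNT
    have h3 : p * ηS ≤ ηS := by nlinarith
    simp only [hD]; linarith
  have hMpos : 0 < ηI + ηT + ηNT + ηS := by linarith
  have hHle0 : H v ((1 - p) * v) ≤ 0 := by
    have key : ∀ ε > (0:ℝ), H v ((1 - p) * v) ≤ 0 + ε := by
      intro ε hε
      set δ := ε / (ηI + ηT + ηNT + ηS) with hδ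
      have hδpos : 0 < δ := div_pos hε hMpos
      have : sInf S < v + δ := by rw [← hv]; linarith
      obtain ⟨y, ⟨b, hb, c, hc, hy⟩, hylt⟩ := exists_lt_of_csInf_lt hSne this
      have hFlt : F b c < v + δ := hy ▸ hylt
      have hHbc : H b c = D b c * (F b c - v) := by
        rw [hFND]
        field_simp [hH, (hDpos b c).ne']
        ring
      have h1 : H b c ≤ D b c * δ := by
        rw [hHbc]
        exact mul_le_mul_of_nonneg_left (by linarith) (hDpos b c).le
      have h2 : D b c * δ ≤ (ηI + ηT + ηNT + ηS) * δ :=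
        mul_le_mul_of_nonneg_right (hDle b c) hδpos.le
      have h3 : (ηI + ηT + ηNT + ηS) * δ = ε := by
        rw [hδ]; field_simp
      have := hHmin b c
      linarith
    linarith [le_of_forall_pos_le_add key]
  have hHge0 : 0 ≤ H v ((1 - p) * v) :=
    hHnn v ((1 - p) * v) hv0 (mul_nonneg h1p.le hv0)
  have hHeq : H v ((1 - p) * v) = 0 := le_antisymm hHle0 hHge0
  have hFveq : F v ((1 - p) * v) = v := by
    rw [hFND, div_eq_iff (hDpos v ((1 - p) * v)).ne']
    simp only [hH] at hHeq
    linarith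
  refine ⟨hFveq, ?_⟩
  set S2 : Set ℝ := {y : ℝ | ∃ b ≥ (0 : ℝ), F b ((1 - p) * b) = y} with hS2
  have hvS2 : v ∈ S2 := ⟨v, hv0, hFveq⟩
  have hlb : ∀ y ∈ S2, v ≤ y := by
    rintro y ⟨b, hb, rfl⟩
    exact hvle b ((1 - p) * b) hb (mul_nonneg h1p.le hb)
  exact le_antisymm (csInf_le ⟨v, hlb⟩ hvS2) (le_csInf ⟨v, hvS2⟩ hlb)
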